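/- arXiv:1105.1242 — 2 statements merged into one kernel-verified Lean document; each statement's English description precedes it below -/
import Mathlib

section
/- Let f : [0,1] → [0,∞) satisfy f(p) = f(1−p) for all p ∈ [0,1], and suppose p ↦ f(p)/p is non-increasing on (0,1]. Let 0 ≤ p_1 ≤ p_2 ≤ … ≤ p_n ≤ 1 and let 1 ≤ θ ≤ n. Then the index i = n−θ+1 attains the minimum in the dynamic-programming recursion: for every j ∈ {1,…,n}, f(p_{n−θ+1}) + p_{n−θ+1}·C_f(θ−1; p_{−(n−θ+1)}) + (1−p_{n−θ+1})·C_f(θ; p_{−(n−θ+1)}) ≤ f(p_j) + p_j·C_f(θ−1; p_{−j}) + (1−p_j)·C_f(θ; p_{−j}). -/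
/-- The optimal expected cost `C_f(θ; p)` of sequentially computing the Boolean
threshold function `Π_θ` on independent Bernoulli variables with parameters given by
the list `p`, where querying a node with parameter `q` costs `f q`.
`cost f θ p = 0` if `θ = 0` or `θ > p.length`, and otherwise it is the minimum over
nodes `i` of `f p_i + p_i • cost f (θ-1) p_{-i} + (1 - p_i) • cost f θ p_{-i}`. -/
noncomputable def cost (f : ℝ → ℝ) : ℕ → List ℝ → ℝ
  | 0, _ => 0
  | (θ+1), p =>
      if p.length < θ + 1 then 0
      else ⨅ i : Fin p.length,
        (f (p.get i) + p.get i * cost f θ (p.eraseIdx i.1)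
          + (1 - p.get i) * cost f (θ+1) (p.eraseIdx i.1))
termination_by θ p => p.length
decreasing_by
  all_goals (have h := i.isLt; simp [List.length_eraseIdx, h]; omega)

namespace ThresholdDP

theorem gc (l : List ℝ) {i j : ℕ} (hi : i < l.length) (hj : j < l.length) (h : i = j) :
    l[i] = l[j] := by subst h; rfl

theorem len_er_le (l : List ℝ) (k : ℕ) :
    l.length - 1 ≤ (l.eraseIdx k).length ∧ (l.eraseIdx k).length ≤ l.length := by
  rw [List.length_eraseIdx]; split <;> omega

theorem length_erase {l : List ℝ} {k : ℕ} (hk : k < l.length) :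
    (l.eraseIdx k).length = l.length - 1 := by
  rw [List.length_eraseIdx, if_pos hk]

theorem er_lt {l : List ℝ} {k n : ℕ} (h : n < (l.eraseIdx k).length) (hlt : n < k) :
    (l.eraseIdx k)[n] = l[n]'(by have := len_er_le l k; omega) := by
  rw [List.getElem_eraseIdx]; exact dif_pos hlt

theorem er_ge {l : List ℝ} {k n : ℕ} (h : n < (l.eraseIdx k).length) (hge : k ≤ n) :
    (l.eraseIdx k)[n] = l[n+1]'(by
      have h2 := (len_er_le l k).2
      have hk : k < l.length := by omega
      have := length_erase hk; omega) := by
  rw [List.getElem_eraseIdx]; exact dif_neg (by omega)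

/-- entries in [0,1] -/
def InI (l : List ℝ) : Prop := ∀ x ∈ l, 0 ≤ x ∧ x ≤ 1

/-- sorted nondecreasing -/
def Srt (l : List ℝ) : Prop := ∀ i j : ℕ, (hij : i ≤ j) → (hj : j < l.length) →
  l[i]'(lt_of_le_of_lt hij hj) ≤ l[j]

theorem InI.erase {l : List ℝ} (h : InI l) (k : ℕ) : InI (l.eraseIdx k) :=
  fun x hx => h x ((l.eraseIdx_sublist k).mem hx)

theorem mem_getElem (l : List ℝ) (n : ℕ) (h : n < l.length) : l[n] ∈ l :=
  List.getElem_mem h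

theorem Srt.erase {l : List ℝ} (h : Srt l) (k : ℕ) : Srt (l.eraseIdx k) := by
  intro i j hij hj
  have hi : i < (l.eraseIdx k).length := lt_of_le_of_lt hij hj
  have hb := len_er_le l k
  rcases Nat.lt_or_ge i k with h1|h1 <;> rcases Nat.lt_or_ge j k with h2|h2
  · rw [er_lt hi h1, er_lt hj h2]; apply h <;> omega
  · rw [er_lt hi h1, er_ge hj h2]; apply h <;> omega
  · omega
  · rw [er_ge hi h1, er_ge hj h2]; apply h <;> omega

/-- erase commutation -/
theorem eraseIdx_comm (l : List ℝ) {i j : ℕ} (hij : i ≤ j) (hjl : j + 1 < l.length) :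
    (l.eraseIdx (j+1)).eraseIdx i = (l.eraseIdx i).eraseIdx j := by
  have L1 : (l.eraseIdx (j+1)).length = l.length - 1 := length_erase hjl
  have L3 : (l.eraseIdx i).length = l.length - 1 := length_erase (by omega)
  have L2 : ((l.eraseIdx (j+1)).eraseIdx i).length = l.length - 2 := by
    rw [length_erase (by omega), L1]; omega
  have L4 : ((l.eraseIdx i).eraseIdx j).length = l.length - 2 := by
    rw [length_erase (by omega), L3]; omega
  apply List.ext_getElem
  · omega
  · intro n h1 h2
    rcases Nat.lt_or_ge n i with c1|c1
    · rw [er_lt h1 c1, er_lt (by omega) (by omega : n < j+1), er_lt h2 (by omega : n < j),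
        er_lt (by omega) c1]
    · rcases Nat.lt_or_ge n j with c2|c2
      · rw [er_ge h1 c1, er_lt (by omega) (by omega : n+1 < j+1), er_lt h2 c2,
          er_ge (by omega) c1]
      · rw [er_ge h1 c1, er_ge (by omega) (by omega : j+1 ≤ n+1), er_ge h2 c2,
          er_ge (by omega) (by omega : i ≤ n+1)]

theorem eraseIdx_reverse (l : List ℝ) (k : ℕ) (hk : k < l.length) :
    l.reverse.eraseIdx k = (l.eraseIdx (l.length - 1 - k)).reverse := by
  have h2 : (l.eraseIdx (l.length - 1 - k)).length = l.length - 1 :=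
    length_erase (by omega)
  have h1 : (l.reverse.eraseIdx k).length = l.length - 1 := by
    have := length_erase (l := l.reverse) (k := k) (by simpa using hk)
    simpa using this
  apply List.ext_getElem
  · rw [h1, List.length_reverse, h2]
  · intro n hn1 hn2
    have hn : n < l.length - 1 := by omega
    rw [List.getElem_reverse]
    rcases Nat.lt_or_ge n k with c1|c1
    · rw [er_lt hn1 c1, List.getElem_reverse,
        er_ge (by omega) (by omega : l.length - 1 - k ≤ (l.eraseIdx (l.length - 1 - k)).length - 1 - n)]
      apply gc; omega
    · rw [er_ge hn1 c1, List.getElem_reverse,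
        er_lt (by omega) (by omega : (l.eraseIdx (l.length - 1 - k)).length - 1 - n < l.length - 1 - k)]
      apply gc; omega

theorem map_eraseIdx (g : ℝ → ℝ) (l : List ℝ) (k : ℕ) :
    (l.map g).eraseIdx k = (l.eraseIdx k).map g := by
  have b1 := len_er_le l k
  apply List.ext_getElem
  · simp only [List.length_eraseIdx, List.length_map]
    repeat' split
    all_goals omega
  · intro n hh1 hh2
    have hh2' : n < (l.eraseIdx k).length := by simpa using hh2
    have hh1' : n < (l.map g).length - 1 ∨ True := Or.inr trivial
    rcases Nat.lt_or_ge n k with c1|c1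
    · rw [er_lt hh1 c1]
      simp only [List.getElem_map]
      rw [er_lt hh2' c1]
    · rw [er_ge hh1 c1]
      simp only [List.getElem_map]
      rw [er_ge hh2' c1]

section costBasic

variable {f : ℝ → ℝ} (hf0 : ∀ x ∈ Set.Icc (0:ℝ) 1, 0 ≤ f x)

/-- term value: cost of querying node k first, for threshold θ+1 -/
noncomputable def trm (f : ℝ → ℝ) (θ : ℕ) (l : List ℝ) (k : ℕ) : ℝ :=
  f (l.getD k 0) + l.getD k 0 * cost f θ (l.eraseIdx k)
    + (1 - l.getD k 0) * cost f (θ+1) (l.eraseIdx k)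

theorem cost_zero (l : List ℝ) : cost f 0 l = 0 := by rw [cost]

theorem cost_of_lt {l : List ℝ} {θ : ℕ} (h : l.length < θ) : cost f θ l = 0 := by
  match θ with
  | 0 => exact cost_zero l
  | θ+1 => rw [cost, if_pos h]

theorem cost_eq_iInf {l : List ℝ} {θ : ℕ} (h : θ + 1 ≤ l.length) :
    cost f (θ+1) l = ⨅ i : Fin l.length,
        (f (l.get i) + l.get i * cost f θ (l.eraseIdx i.1)
          + (1 - l.get i) * cost f (θ+1) (l.eraseIdx i.1)) := by
  rw [cost, if_neg (by omega)]

theorem get_trm {l : List ℝ} {θ : ℕ} (i : Fin l.length) :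
    f (l.get i) + l.get i * cost f θ (l.eraseIdx i.1)
      + (1 - l.get i) * cost f (θ+1) (l.eraseIdx i.1) = trm f θ l i.1 := by
  unfold trm
  rw [List.getD_eq_getElem l 0 i.2]
  rfl

include hf0 in
theorem cost_nonneg : ∀ (m : ℕ) (l : List ℝ), l.length ≤ m → InI l → ∀ θ, 0 ≤ cost f θ l := by
  intro m
  induction m with
  | zero => intro l hl _ θ
            rcases θ with _|θ
            · rw [cost_zero]
            · rw [cost_of_lt (by omega)]
  | succ m ih =>
    intro l hl hI θ
    rcases θ with _|θ
    · rw [cost_zero]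
    rcases Nat.lt_or_ge l.length (θ+1) with h|h
    · rw [cost_of_lt h]
    · rw [cost_eq_iInf h]
      haveI : Nonempty (Fin l.length) := ⟨⟨0, by omega⟩⟩
      apply le_ciInf
      intro i
      have hm := hI _ (mem_getElem l i.1 i.2)
      have h1 : 0 ≤ cost f θ (l.eraseIdx i.1) := by
        apply ih _ _ (hI.erase i.1)
        rw [length_erase i.2]; omega
      have h2 : 0 ≤ cost f (θ+1) (l.eraseIdx i.1) := by
        apply ih _ _ (hI.erase i.1)
        rw [length_erase i.2]; omega
      have h3 : 0 ≤ f (l.get i) := hf0 _ ⟨hm.1, hm.2⟩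
      have := hm.1; have := hm.2
      simp only [List.get_eq_getElem] at *
      nlinarith

include hf0 in
theorem cost_nonneg' {l : List ℝ} (hI : InI l) (θ : ℕ) : 0 ≤ cost f θ l :=
  cost_nonneg hf0 l.length l le_rfl hI θ

include hf0 in
theorem trm_nonneg {l : List ℝ} (hI : InI l) (θ : ℕ) {k : ℕ} (hk : k < l.length) :
    0 ≤ trm f θ l k := by
  unfold trm
  rw [List.getD_eq_getElem l 0 hk]
  have hm := hI _ (mem_getElem l k hk)
  have h1 := cost_nonneg' hf0 (hI.erase k) θ
  have h2 := cost_nonneg' hf0 (hI.erase k) (θ+1)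
  have h3 : 0 ≤ f (l[k]) := hf0 _ ⟨hm.1, hm.2⟩
  nlinarith [hm.1, hm.2]

include hf0 in
theorem cost_le_trm {l : List ℝ} (hI : InI l) (θ : ℕ) {k : ℕ} (hk : k < l.length) :
    cost f (θ+1) l ≤ trm f θ l k := by
  rcases Nat.lt_or_ge l.length (θ+1) with h|h
  · rw [cost_of_lt h]; exact trm_nonneg hf0 hI θ hk
  · rw [cost_eq_iInf h]
    refine le_trans (ciInf_le (Set.Finite.bddBelow (Set.finite_range _)) ⟨k, hk⟩) ?_
    rw [get_trm]

end costBasic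

/-! ### The pivot strategy value `W` and exact-count probabilities `Ex` -/

noncomputable def W (f : ℝ → ℝ) : ℕ → List ℝ → ℝ
  | 0, _ => 0
  | (t+1), L =>
      if h : L.length < t + 1 then 0
      else f (L.getD (L.length - (t+1)) 0)
        + L.getD (L.length - (t+1)) 0 * W f t (L.eraseIdx (L.length - (t+1)))
        + (1 - L.getD (L.length - (t+1)) 0) * W f (t+1) (L.eraseIdx (L.length - (t+1)))
termination_by t L => L.length
decreasing_by
  all_goals (rw [List.length_eraseIdx]; split <;> omega)

theorem W_zero (f : ℝ → ℝ) (L : List ℝ) : W f 0 L = 0 := by rw [W]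

theorem W_of_lt (f : ℝ → ℝ) {L : List ℝ} {θ : ℕ} (h : L.length < θ) : W f θ L = 0 := by
  match θ with
  | 0 => exact W_zero f L
  | (t+1) => rw [W, dif_pos h]

theorem W_unfold (f : ℝ → ℝ) {L : List ℝ} {t : ℕ} (h : t + 1 ≤ L.length) :
    W f (t+1) L = f (L.getD (L.length - (t+1)) 0)
      + L.getD (L.length - (t+1)) 0 * W f t (L.eraseIdx (L.length - (t+1)))
      + (1 - L.getD (L.length - (t+1)) 0) * W f (t+1) (L.eraseIdx (L.length - (t+1))) := by
  rw [W, dif_neg (by omega)]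

/-- probability that exactly `s` of the independent Bernoulli variables are 1 -/
noncomputable def Ex : ℕ → List ℝ → ℝ
  | 0, [] => 1
  | (_+1), [] => 0
  | 0, (x::xs) => (1 - x) * Ex 0 xs
  | (s+1), (x::xs) => x * Ex s xs + (1 - x) * Ex (s+1) xs

theorem Ex_of_lt : ∀ (M : List ℝ) (s : ℕ), M.length < s → Ex s M = 0 := by
  intro M
  induction M with
  | nil =>
    intro s hs
    match s, hs with
    | (s+1), _ => rw [Ex]
  | cons x xs ih =>
    intro s hs
    match s, hs with
    | (s+1), hs =>
      have h1 : xs.length < s := by simpa using hs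
      rw [Ex, ih s h1, ih (s+1) (by omega)]; ring

theorem Ex_nonneg : ∀ (M : List ℝ) (s : ℕ), InI M → 0 ≤ Ex s M := by
  intro M
  induction M with
  | nil =>
    intro s _
    match s with
    | 0 => rw [Ex]; norm_num
    | (s+1) => rw [Ex]
  | cons x xs ih =>
    intro s hI
    have hx := hI x (by simp)
    have hxs : InI xs := fun y hy => hI y (by simp [hy])
    match s with
    | 0 =>
      rw [Ex]
      have := ih 0 hxs
      nlinarith [hx.1, hx.2]
    | (s+1) =>
      rw [Ex]
      have h1 := ih s hxs
      have h2 := ih (s+1) hxs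
      nlinarith [hx.1, hx.2]

/-- conditioning on one coordinate, zero-successes case -/
theorem Ex_erase_zero : ∀ (M : List ℝ) (i : ℕ), i < M.length →
    Ex 0 M = (1 - M.getD i 0) * Ex 0 (M.eraseIdx i) := by
  intro M
  induction M with
  | nil => intro i hi; simp at hi
  | cons x xs ih =>
    intro i hi
    match i with
    | 0 => simp only [List.getD_cons_zero, List.eraseIdx_cons_zero]; rw [Ex]
    | (i+1) =>
      have hi' : i < xs.length := by simpa using hi
      simp only [List.getD_cons_succ, List.eraseIdx_cons_succ]
      rw [Ex, Ex, ih i hi']; ring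

/-- conditioning on one coordinate, successor case -/
theorem Ex_erase_succ : ∀ (M : List ℝ) (i : ℕ), i < M.length → ∀ s : ℕ,
    Ex (s+1) M = M.getD i 0 * Ex s (M.eraseIdx i)
      + (1 - M.getD i 0) * Ex (s+1) (M.eraseIdx i) := by
  intro M
  induction M with
  | nil => intro i hi; simp at hi
  | cons x xs ih =>
    intro i hi s
    match i with
    | 0 => simp only [List.getD_cons_zero, List.eraseIdx_cons_zero]; rw [Ex]
    | (i+1) =>
      have hi' : i < xs.length := by simpa using hi
      simp only [List.getD_cons_succ, List.eraseIdx_cons_succ]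
      match s with
      | 0 =>
        rw [Ex, Ex, Ex, ih i hi' 0, Ex_erase_zero xs i hi']; ring
      | (s+1) =>
        rw [Ex, Ex, Ex, ih i hi' s, ih i hi' (s+1)]; ring

/-- drop commutes with eraseIdx below the dropped part -/
theorem drop_eraseIdx_le {L : List ℝ} {k i : ℕ} (hk : k ≤ i) (hi : i < L.length) :
    (L.eraseIdx i).drop k = (L.drop k).eraseIdx (i - k) := by
  have h1 : (L.eraseIdx i).length = L.length - 1 := length_erase hi
  apply List.ext_getElem
  · rw [List.length_drop, h1, List.length_eraseIdx, List.length_drop]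
    split <;> omega
  · intro n hn1 hn2
    have hn1' : n < L.length - 1 - k := by simpa [h1] using hn1
    rw [List.getElem_drop]
    rcases Nat.lt_or_ge (k + n) i with c1|c1
    · rw [er_lt (by omega) (by omega : k + n < i), er_lt (by omega) (by omega : n < i - k),
        List.getElem_drop]
    · rw [er_ge (by omega) c1, er_ge (by omega) (by omega : i - k ≤ n), List.getElem_drop]
      apply gc; omega

/-- drop above an erased lower index -/
theorem drop_eraseIdx_gt {L : List ℝ} {k j : ℕ} (hj : j < k) :
    (L.eraseIdx j).drop k = L.drop (k+1) := by
  rcases Nat.lt_or_ge j L.length with hjl|hjl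
  · have h1 : (L.eraseIdx j).length = L.length - 1 := length_erase hjl
    apply List.ext_getElem
    · simp only [List.length_drop, h1]; omega
    · intro n hn1 hn2
      have hn1' : n < L.length - 1 - k := by simpa [h1] using hn1
      rw [List.getElem_drop, List.getElem_drop, er_ge (by omega) (by omega)]
      apply gc; omega
  · rw [List.eraseIdx_of_length_le hjl]
    rcases Nat.lt_or_ge k L.length with h|h
    · omega
    · rw [List.drop_eq_nil_of_le h, List.drop_eq_nil_of_le (by omega)]

theorem drop_cons {L : List ℝ} {k : ℕ} (hk : k < L.length) :
    L.drop k = L.getD k 0 :: L.drop (k+1) := by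
  rw [List.getD_eq_getElem _ _ hk]
  exact List.drop_eq_getElem_cons hk


theorem getD_erase_lt {L : List ℝ} {i k : ℕ} (hk : k < i) (h : k < (L.eraseIdx i).length) :
    (L.eraseIdx i).getD k 0 = L.getD k 0 := by
  rw [List.getD_eq_getElem _ _ h, er_lt h hk]
  exact (List.getD_eq_getElem _ _ _).symm

theorem getD_erase_ge {L : List ℝ} {i k : ℕ} (hk : i ≤ k) (h : k < (L.eraseIdx i).length) :
    (L.eraseIdx i).getD k 0 = L.getD (k+1) 0 := by
  rw [List.getD_eq_getElem _ _ h, er_ge h hk]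
  exact (List.getD_eq_getElem _ _ _).symm

theorem getD_drop {L : List ℝ} {k i : ℕ} (h : k + i < L.length) :
    (L.drop k).getD i 0 = L.getD (k+i) 0 := by
  rw [List.getD_eq_getElem _ _ (by rw [List.length_drop]; omega), List.getElem_drop]
  exact (List.getD_eq_getElem _ _ _).symm


open Finset in
/-- The certificate identity: expanding the optimal (pivot) strategy value in terms of
querying a sub-pivot node `j` first. -/
theorem certW (f : ℝ → ℝ) :
    ∀ (n : ℕ) (L : List ℝ) (t j pv : ℕ), L.length ≤ n → L.length = pv + t + 1 → j < pv →
    W f (t+1) L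
      = f (L.getD j 0) * (1 - ∑ u ∈ Finset.Ico (j+1) (pv+1), Ex t (L.drop (u+1)) * L.getD u 0)
        + L.getD j 0 * (W f t (L.eraseIdx j)
            + ∑ u ∈ Finset.Ico (j+1) (pv+1), Ex t (L.drop (u+1)) * f (L.getD u 0))
        + (1 - L.getD j 0) * W f (t+1) (L.eraseIdx j) := by
  intro n
  induction n with
  | zero => intro L t j pv h0 hlen hj; omega
  | succ n ih =>
    intro L t j pv hn hlen hj
    have hm : L.length = pv + t + 1 := hlen
    have hpvm : pv < L.length := by omega
    have lN : (L.eraseIdx pv).length = pv + t := by rw [length_erase hpvm]; omega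
    have lLj : (L.eraseIdx j).length = pv + t := by rw [length_erase (by omega)]; omega
    have hb : L.getD j 0 = L.getD j 0 := rfl
    -- commutation: (L∖j)∖(pv−1) = (L∖pv)∖j
    have hcomm : (L.eraseIdx j).eraseIdx (pv-1) = (L.eraseIdx pv).eraseIdx j := by
      have h1 := eraseIdx_comm L (show j ≤ pv - 1 by omega) (show (pv-1)+1 < L.length by omega)
      rw [show (pv-1)+1 = pv by omega] at h1
      exact h1.symm
    match t with
    | 0 =>
      -- threshold 1 : pivot is the top element
      have SN1e : ∀ u ∈ Finset.Ico (j+1) pv,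
          Ex 0 (L.drop (u+1)) * L.getD u 0
            = (1 - L.getD pv 0) * (Ex 0 ((L.eraseIdx pv).drop (u+1)) * L.getD u 0) := by
        intro u hu
        simp only [Finset.mem_Ico] at hu
        have hd : (L.drop (u+1)).length = pv - u := by rw [List.length_drop]; omega
        have he : Ex 0 (L.drop (u+1))
            = (1 - (L.drop (u+1)).getD (pv - (u+1)) 0) * Ex 0 ((L.drop (u+1)).eraseIdx (pv - (u+1))) :=
          Ex_erase_zero _ _ (by omega)
        rw [he, getD_drop (by omega), drop_eraseIdx_le (by omega) hpvm,
          show (u+1) + (pv - (u+1)) = pv by omega]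
        ring
      have SN2e : ∀ u ∈ Finset.Ico (j+1) pv,
          Ex 0 (L.drop (u+1)) * f (L.getD u 0)
            = (1 - L.getD pv 0) * (Ex 0 ((L.eraseIdx pv).drop (u+1)) * f (L.getD u 0)) := by
        intro u hu
        simp only [Finset.mem_Ico] at hu
        have he : Ex 0 (L.drop (u+1))
            = (1 - (L.drop (u+1)).getD (pv - (u+1)) 0) * Ex 0 ((L.drop (u+1)).eraseIdx (pv - (u+1))) :=
          Ex_erase_zero _ _ (by rw [List.length_drop]; omega)
        rw [he, getD_drop (by omega), drop_eraseIdx_le (by omega) hpvm,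
          show (u+1) + (pv - (u+1)) = pv by omega]
        ring
      have SUM7 : ∑ u ∈ Finset.Ico (j+1) (pv+1), Ex 0 (L.drop (u+1)) * L.getD u 0
          = (1 - L.getD pv 0) * (∑ u ∈ Finset.Ico (j+1) pv,
              Ex 0 ((L.eraseIdx pv).drop (u+1)) * L.getD u 0) + L.getD pv 0 := by
        rw [Finset.sum_Ico_succ_top (by omega), Finset.sum_congr rfl SN1e, ← Finset.mul_sum,
          List.drop_eq_nil_of_le (by omega), show Ex 0 ([] : List ℝ) = 1 from by rw [Ex]]
        ring
      have SUM8 : ∑ u ∈ Finset.Ico (j+1) (pv+1), Ex 0 (L.drop (u+1)) * f (L.getD u 0)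
          = (1 - L.getD pv 0) * (∑ u ∈ Finset.Ico (j+1) pv,
              Ex 0 ((L.eraseIdx pv).drop (u+1)) * f (L.getD u 0)) + f (L.getD pv 0) := by
        rw [Finset.sum_Ico_succ_top (by omega), Finset.sum_congr rfl SN2e, ← Finset.mul_sum,
          List.drop_eq_nil_of_le (by omega), show Ex 0 ([] : List ℝ) = 1 from by rw [Ex]]
        ring
      have E1 : W f 1 L = f (L.getD pv 0)
          + (1 - L.getD pv 0) * W f 1 (L.eraseIdx pv) := by
        rw [W_unfold f (by omega), show L.length - (0+1) = pv by omega, W_zero]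
        ring
      have E5 : W f 1 (L.eraseIdx j) = f (L.getD pv 0)
          + (1 - L.getD pv 0) * W f 1 ((L.eraseIdx pv).eraseIdx j) := by
        rw [W_unfold f (by omega), show (L.eraseIdx j).length - (0+1) = pv - 1 by omega,
          getD_erase_ge (by omega) (by omega), show (pv-1)+1 = pv by omega, W_zero, hcomm]
        ring
      have E3 : W f 1 (L.eraseIdx pv) = f (L.getD j 0)
            * (1 - ∑ u ∈ Finset.Ico (j+1) pv, Ex 0 ((L.eraseIdx pv).drop (u+1)) * L.getD u 0)
          + L.getD j 0 * (∑ u ∈ Finset.Ico (j+1) pv, Ex 0 ((L.eraseIdx pv).drop (u+1)) * f (L.getD u 0))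
          + (1 - L.getD j 0) * W f 1 ((L.eraseIdx pv).eraseIdx j) := by
        rcases Nat.lt_or_ge j (pv-1) with hc|hc
        · have h1 := ih (L.eraseIdx pv) 0 j (pv-1) (by omega) (by omega) (by omega)
          rw [show (pv-1)+1 = pv by omega] at h1
          rw [h1, getD_erase_lt (by omega) (by omega), W_zero]
          have hs1 : ∀ u ∈ Finset.Ico (j+1) pv,
              Ex 0 ((L.eraseIdx pv).drop (u+1)) * (L.eraseIdx pv).getD u 0
              = Ex 0 ((L.eraseIdx pv).drop (u+1)) * L.getD u 0 := by
            intro u hu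
            simp only [Finset.mem_Ico] at hu
            rw [getD_erase_lt (by omega) (by omega)]
          have hs2 : ∀ u ∈ Finset.Ico (j+1) pv,
              Ex 0 ((L.eraseIdx pv).drop (u+1)) * f ((L.eraseIdx pv).getD u 0)
              = Ex 0 ((L.eraseIdx pv).drop (u+1)) * f (L.getD u 0) := by
            intro u hu
            simp only [Finset.mem_Ico] at hu
            rw [getD_erase_lt (by omega) (by omega)]
          rw [Finset.sum_congr rfl hs1, Finset.sum_congr rfl hs2]
          ring
        · have hje : j = pv - 1 := by omega
          have hico : Finset.Ico (j+1) pv = ∅ := by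
            apply Finset.Ico_eq_empty; omega
          rw [hico]
          simp only [Finset.sum_empty]
          rw [W_unfold f (by omega), show (L.eraseIdx pv).length - (0+1) = j by omega,
            getD_erase_lt (by omega) (by omega), W_zero]
          ring
      rw [E1, E5, E3, SUM7, SUM8, W_zero]
      ring
    | (t'+1) =>
      -- general case
      have hpv1m : pv + 1 < L.length := by omega
      -- value abbreviations are kept inline; key facts:
      have hgc : Ex (t'+1) (L.drop (pv+1)) = L.getD (pv+1) 0 * Ex t' (L.drop (pv+2)) := by
        rw [drop_cons hpv1m, Ex, Ex_of_lt _ (t'+1) (by rw [List.length_drop]; omega),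
          show pv+1+1 = pv+2 from rfl]
        ring
      -- pointwise conditioning on a = L[pv] for u < pv
      have hptA : ∀ u ∈ Finset.Ico (j+1) pv,
          Ex (t'+1) (L.drop (u+1)) * L.getD u 0
            = L.getD pv 0 * (Ex t' ((L.eraseIdx pv).drop (u+1)) * L.getD u 0)
              + (1 - L.getD pv 0) * (Ex (t'+1) ((L.eraseIdx pv).drop (u+1)) * L.getD u 0) := by
        intro u hu
        simp only [Finset.mem_Ico] at hu
        have he := Ex_erase_succ (L.drop (u+1)) (pv - (u+1)) (by rw [List.length_drop]; omega) t'
        rw [he, getD_drop (by omega), show (u+1) + (pv - (u+1)) = pv by omega,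
          drop_eraseIdx_le (by omega) hpvm]
        ring
      have hptB : ∀ u ∈ Finset.Ico (j+1) pv,
          Ex (t'+1) (L.drop (u+1)) * f (L.getD u 0)
            = L.getD pv 0 * (Ex t' ((L.eraseIdx pv).drop (u+1)) * f (L.getD u 0))
              + (1 - L.getD pv 0) * (Ex (t'+1) ((L.eraseIdx pv).drop (u+1)) * f (L.getD u 0)) := by
        intro u hu
        simp only [Finset.mem_Ico] at hu
        have he := Ex_erase_succ (L.drop (u+1)) (pv - (u+1)) (by rw [List.length_drop]; omega) t'
        rw [he, getD_drop (by omega), show (u+1) + (pv - (u+1)) = pv by omega,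
          drop_eraseIdx_le (by omega) hpvm]
        ring
      have SUM7 : ∑ u ∈ Finset.Ico (j+1) (pv+1), Ex (t'+1) (L.drop (u+1)) * L.getD u 0
          = L.getD pv 0 * (∑ u ∈ Finset.Ico (j+1) pv, Ex t' ((L.eraseIdx pv).drop (u+1)) * L.getD u 0)
            + (1 - L.getD pv 0) * (∑ u ∈ Finset.Ico (j+1) pv, Ex (t'+1) ((L.eraseIdx pv).drop (u+1)) * L.getD u 0)
            + L.getD (pv+1) 0 * Ex t' (L.drop (pv+2)) * L.getD pv 0 := by
        rw [Finset.sum_Ico_succ_top (by omega), Finset.sum_congr rfl hptA,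
          Finset.sum_add_distrib, ← Finset.mul_sum, ← Finset.mul_sum, hgc]
      have SUM8 : ∑ u ∈ Finset.Ico (j+1) (pv+1), Ex (t'+1) (L.drop (u+1)) * f (L.getD u 0)
          = L.getD pv 0 * (∑ u ∈ Finset.Ico (j+1) pv, Ex t' ((L.eraseIdx pv).drop (u+1)) * f (L.getD u 0))
            + (1 - L.getD pv 0) * (∑ u ∈ Finset.Ico (j+1) pv, Ex (t'+1) ((L.eraseIdx pv).drop (u+1)) * f (L.getD u 0))
            + L.getD (pv+1) 0 * Ex t' (L.drop (pv+2)) * f (L.getD pv 0) := by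
        rw [Finset.sum_Ico_succ_top (by omega), Finset.sum_congr rfl hptB,
          Finset.sum_add_distrib, ← Finset.mul_sum, ← Finset.mul_sum, hgc]
      have E1 : W f (t'+2) L = f (L.getD pv 0)
          + L.getD pv 0 * W f (t'+1) (L.eraseIdx pv)
          + (1 - L.getD pv 0) * W f (t'+2) (L.eraseIdx pv) := by
        rw [W_unfold f (by omega), show L.length - (t'+1+1) = pv by omega]
      -- E2 : expansion of W f (t'+1) (L∖pv) via IH at (N, t', j, pv)
      have E2 : W f (t'+1) (L.eraseIdx pv) = f (L.getD j 0)
            * (1 - ((∑ u ∈ Finset.Ico (j+1) pv, Ex t' ((L.eraseIdx pv).drop (u+1)) * L.getD u 0)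
                + Ex t' (L.drop (pv+2)) * L.getD (pv+1) 0))
          + L.getD j 0 * (W f t' ((L.eraseIdx pv).eraseIdx j)
              + ((∑ u ∈ Finset.Ico (j+1) pv, Ex t' ((L.eraseIdx pv).drop (u+1)) * f (L.getD u 0))
                + Ex t' (L.drop (pv+2)) * f (L.getD (pv+1) 0)))
          + (1 - L.getD j 0) * W f (t'+1) ((L.eraseIdx pv).eraseIdx j) := by
        have h1 := ih (L.eraseIdx pv) t' j pv (by omega) (by omega) hj
        rw [h1, getD_erase_lt (by omega) (by omega)]
        have hs1 : ∀ u ∈ Finset.Ico (j+1) pv,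
            Ex t' ((L.eraseIdx pv).drop (u+1)) * (L.eraseIdx pv).getD u 0
            = Ex t' ((L.eraseIdx pv).drop (u+1)) * L.getD u 0 := by
          intro u hu; simp only [Finset.mem_Ico] at hu
          rw [getD_erase_lt (by omega) (by omega)]
        have hs2 : ∀ u ∈ Finset.Ico (j+1) pv,
            Ex t' ((L.eraseIdx pv).drop (u+1)) * f ((L.eraseIdx pv).getD u 0)
            = Ex t' ((L.eraseIdx pv).drop (u+1)) * f (L.getD u 0) := by
          intro u hu; simp only [Finset.mem_Ico] at hu
          rw [getD_erase_lt (by omega) (by omega)]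
        rw [Finset.sum_Ico_succ_top (by omega), Finset.sum_Ico_succ_top (by omega),
          Finset.sum_congr rfl hs1, Finset.sum_congr rfl hs2,
          drop_eraseIdx_gt (show pv < pv + 1 by omega),
          show pv+1+1 = pv+2 from rfl,
          getD_erase_ge (le_refl pv) (by omega)]
      -- E3 : expansion of W f (t'+2) (L∖pv)
      have E3 : W f (t'+2) (L.eraseIdx pv) = f (L.getD j 0)
            * (1 - ∑ u ∈ Finset.Ico (j+1) pv, Ex (t'+1) ((L.eraseIdx pv).drop (u+1)) * L.getD u 0)
          + L.getD j 0 * (W f (t'+1) ((L.eraseIdx pv).eraseIdx j)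
              + ∑ u ∈ Finset.Ico (j+1) pv, Ex (t'+1) ((L.eraseIdx pv).drop (u+1)) * f (L.getD u 0))
          + (1 - L.getD j 0) * W f (t'+2) ((L.eraseIdx pv).eraseIdx j) := by
        rcases Nat.lt_or_ge j (pv-1) with hc|hc
        · have h1 := ih (L.eraseIdx pv) (t'+1) j (pv-1) (by omega) (by omega) (by omega)
          rw [show (pv-1)+1 = pv by omega] at h1
          rw [h1, getD_erase_lt (by omega) (by omega)]
          have hs1 : ∀ u ∈ Finset.Ico (j+1) pv,
              Ex (t'+1) ((L.eraseIdx pv).drop (u+1)) * (L.eraseIdx pv).getD u 0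
              = Ex (t'+1) ((L.eraseIdx pv).drop (u+1)) * L.getD u 0 := by
            intro u hu; simp only [Finset.mem_Ico] at hu
            rw [getD_erase_lt (by omega) (by omega)]
          have hs2 : ∀ u ∈ Finset.Ico (j+1) pv,
              Ex (t'+1) ((L.eraseIdx pv).drop (u+1)) * f ((L.eraseIdx pv).getD u 0)
              = Ex (t'+1) ((L.eraseIdx pv).drop (u+1)) * f (L.getD u 0) := by
            intro u hu; simp only [Finset.mem_Ico] at hu
            rw [getD_erase_lt (by omega) (by omega)]
          rw [Finset.sum_congr rfl hs1, Finset.sum_congr rfl hs2]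
        · have hico : Finset.Ico (j+1) pv = ∅ := by
            apply Finset.Ico_eq_empty; omega
          rw [hico]
          simp only [Finset.sum_empty]
          rw [W_unfold f (by omega), show (L.eraseIdx pv).length - (t'+1+1) = j by omega,
            getD_erase_lt (by omega) (by omega),
            show (L.eraseIdx pv).eraseIdx j = (L.eraseIdx pv).eraseIdx j from rfl]
          ring
      -- E4 : expansion of W f (t'+1) (L∖j) via IH at (Lj, t', pv−1, pv)
      have E4 : W f (t'+1) (L.eraseIdx j) = f (L.getD pv 0)
            * (1 - Ex t' (L.drop (pv+2)) * L.getD (pv+1) 0)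
          + L.getD pv 0 * (W f t' ((L.eraseIdx pv).eraseIdx j)
              + Ex t' (L.drop (pv+2)) * f (L.getD (pv+1) 0))
          + (1 - L.getD pv 0) * W f (t'+1) ((L.eraseIdx pv).eraseIdx j) := by
        have h1 := ih (L.eraseIdx j) t' (pv-1) pv (by omega) (by omega) (by omega)
        rw [h1, getD_erase_ge (by omega) (by omega), show (pv-1)+1 = pv by omega,
          hcomm]
        have hico : Finset.Ico pv (pv+1) = {pv} := by
          rw [Finset.Ico_add_one_right_eq_Icc, Finset.Icc_self]
        rw [hico, Finset.sum_singleton, Finset.sum_singleton,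
          drop_eraseIdx_gt (show j < pv + 1 by omega), show pv+1+1 = pv+2 from rfl,
          getD_erase_ge (by omega) (by omega)]
      -- E5 : pivot unfold of W f (t'+2) (L∖j)
      have E5 : W f (t'+2) (L.eraseIdx j) = f (L.getD pv 0)
          + L.getD pv 0 * W f (t'+1) ((L.eraseIdx pv).eraseIdx j)
          + (1 - L.getD pv 0) * W f (t'+2) ((L.eraseIdx pv).eraseIdx j) := by
        rw [W_unfold f (by omega), show (L.eraseIdx j).length - (t'+1+1) = pv - 1 by omega,
          getD_erase_ge (by omega) (by omega), show (pv-1)+1 = pv by omega, hcomm]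
      rw [E1, E2, E3, E4, E5, SUM7, SUM8]
      ring


/-- the value of querying node `k` first (threshold `t+1`), continuing optimally -/
noncomputable def trmW (f : ℝ → ℝ) (t : ℕ) (L : List ℝ) (k : ℕ) : ℝ :=
  f (L.getD k 0) + L.getD k 0 * W f t (L.eraseIdx k)
    + (1 - L.getD k 0) * W f (t+1) (L.eraseIdx k)

theorem W_eq_trmW_pivot (f : ℝ → ℝ) {L : List ℝ} {t : ℕ} (h : t + 1 ≤ L.length) :
    W f (t+1) L = trmW f t L (L.length - (t+1)) := by
  rw [W_unfold f h]; rfl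

theorem ratio_ineq {f : ℝ → ℝ} (hf0 : ∀ x ∈ Set.Icc (0:ℝ) 1, 0 ≤ f x)
    (hfm : AntitoneOn (fun x => f x / x) (Set.Ioc (0:ℝ) 1))
    {x y : ℝ} (hx0 : 0 ≤ x) (hxy : x ≤ y) (hy1 : y ≤ 1) :
    x * f y ≤ y * f x := by
  rcases eq_or_lt_of_le hx0 with h|h
  · have h1 : 0 ≤ f x := hf0 x ⟨hx0, by linarith⟩
    have h3 : 0 ≤ f y := hf0 y ⟨by linarith, hy1⟩
    have h2 : 0 ≤ y := by linarith
    nlinarith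
  · have hy0 : 0 < y := by linarith
    have h5 : f y / y ≤ f x / x := hfm (a := x) ⟨h, by linarith⟩ (b := y) ⟨hy0, hy1⟩ hxy
    rw [div_le_div_iff₀ hy0 h] at h5
    nlinarith [h5]

theorem TW_low {f : ℝ → ℝ} (hf0 : ∀ x ∈ Set.Icc (0:ℝ) 1, 0 ≤ f x)
    (hfm : AntitoneOn (fun x => f x / x) (Set.Ioc (0:ℝ) 1))
    {L : List ℝ} (hS : Srt L) (hI : InI L) {t j pv : ℕ}
    (hlen : L.length = pv + t + 1) (hj : j ≤ pv) :
    trmW f t L pv ≤ trmW f t L j := by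
  rcases eq_or_lt_of_le hj with h|h
  · subst h; exact le_refl _
  · have hm : pv < L.length := by omega
    have hcert := certW f L.length L t j pv le_rfl hlen h
    have hWp : W f (t+1) L = trmW f t L pv := by
      rw [W_eq_trmW_pivot f (by omega), show L.length - (t+1) = pv by omega]
    have key : 0 ≤ trmW f t L j - W f (t+1) L := by
      have hexp : trmW f t L j - W f (t+1) L
          = ∑ u ∈ Finset.Ico (j+1) (pv+1),
              Ex t (L.drop (u+1)) * (L.getD u 0 * f (L.getD j 0) - L.getD j 0 * f (L.getD u 0)) := by
        have hterm : ∀ u ∈ Finset.Ico (j+1) (pv+1),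
            Ex t (L.drop (u+1)) * (L.getD u 0 * f (L.getD j 0) - L.getD j 0 * f (L.getD u 0))
            = f (L.getD j 0) * (Ex t (L.drop (u+1)) * L.getD u 0)
              - L.getD j 0 * (Ex t (L.drop (u+1)) * f (L.getD u 0)) := by
          intro u _; ring
        rw [hcert]
        unfold trmW
        rw [Finset.sum_congr rfl hterm, Finset.sum_sub_distrib,
          ← Finset.mul_sum, ← Finset.mul_sum]
        ring
      rw [hexp]
      apply Finset.sum_nonneg
      intro u hu
      simp only [Finset.mem_Ico] at hu
      have hu1 : u < L.length := by omega
      have hj1 : j < L.length := by omega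
      have hIdrop : InI (L.drop (u+1)) := fun x hx => hI x (List.mem_of_mem_drop hx)
      have hEx := Ex_nonneg (L.drop (u+1)) t hIdrop
      have hgj : L.getD j 0 = L[j] := List.getD_eq_getElem _ _ hj1
      have hgu : L.getD u 0 = L[u] := List.getD_eq_getElem _ _ hu1
      have hle : L.getD j 0 ≤ L.getD u 0 := by
        rw [hgj, hgu]; exact hS j u (by omega) hu1
      have h0j : 0 ≤ L.getD j 0 := by rw [hgj]; exact (hI _ (mem_getElem L j hj1)).1
      have h1u : L.getD u 0 ≤ 1 := by rw [hgu]; exact (hI _ (mem_getElem L u hu1)).2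
      have := ratio_ineq hf0 hfm h0j hle h1u
      nlinarith [hEx, this]
    linarith [key, hWp.symm.le]

/-! ### Duality -/

theorem InI_dual {L : List ℝ} (hI : InI L) : InI ((L.map (fun x => 1 - x)).reverse) := by
  intro x hx
  rw [List.mem_reverse, List.mem_map] at hx
  obtain ⟨y, hy, rfl⟩ := hx
  have := hI y hy
  constructor <;> linarith [this.1, this.2]

theorem Srt_dual {L : List ℝ} (hS : Srt L) : Srt ((L.map (fun x => 1 - x)).reverse) := by
  intro i j hij hj
  have hlen : ((L.map (fun x => 1 - x)).reverse).length = L.length := by simp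
  have hml : (L.map (fun x => 1 - x)).length = L.length := by simp
  have hjL : j < L.length := by omega
  rw [List.getElem_reverse, List.getElem_reverse, List.getElem_map, List.getElem_map]
  have h := hS ((L.map (fun x => 1 - x)).length - 1 - j) ((L.map (fun x => 1 - x)).length - 1 - i)
    (by omega) (by omega)
  linarith [h]

theorem dual_getD {L : List ℝ} {k : ℕ} (hk : k < L.length) :
    ((L.map (fun x => 1 - x)).reverse).getD (L.length - 1 - k) 0 = 1 - L.getD k 0 := by
  have h1 : L.length - 1 - k < ((L.map (fun x => 1 - x)).reverse).length := by simp; omega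
  rw [List.getD_eq_getElem _ _ h1, List.getElem_reverse, List.getElem_map,
    List.getD_eq_getElem _ _ hk]
  congr 1
  apply gc
  simp; omega

theorem dual_erase {L : List ℝ} {k : ℕ} (hk : k < L.length) :
    ((L.map (fun x => 1 - x)).reverse).eraseIdx (L.length - 1 - k)
      = ((L.eraseIdx k).map (fun x => 1 - x)).reverse := by
  have h1 : (L.map (fun x => 1 - x)).length = L.length := by simp
  rw [eraseIdx_reverse _ _ (by simp; omega), h1, show L.length - 1 - (L.length - 1 - k) = k by omega,
    map_eraseIdx]

theorem W_dual {f : ℝ → ℝ} (hf_sym : ∀ x ∈ Set.Icc (0:ℝ) 1, f x = f (1 - x)) :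
    ∀ (n : ℕ) (L : List ℝ), L.length ≤ n → InI L → ∀ ψ : ℕ, 1 ≤ ψ → ψ ≤ L.length →
    W f ψ L = W f (L.length + 1 - ψ) ((L.map (fun x => 1 - x)).reverse) := by
  intro n
  induction n with
  | zero => intro L h0 _ ψ h1 h2; omega
  | succ n ih =>
    intro L hn hI ψ h1 h2
    match ψ, h1 with
    | (t+1), _ =>
    have hm : 1 ≤ L.length := by omega
    have hpv : L.length - (t+1) < L.length := by omega
    have hL' : ((L.map (fun x => 1 - x)).reverse).length = L.length := by simp
    have ht' : L.length + 1 - (t+1) = (L.length - t - 1) + 1 := by omega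
    rw [W_unfold f h2, ht',
      W_unfold f (L := (L.map (fun x => 1 - x)).reverse) (t := L.length - t - 1) (by rw [hL']; omega)]
    have hidx : ((L.map (fun x => 1 - x)).reverse).length - ((L.length - t - 1) + 1) = t := by
      rw [hL']; omega
    rw [hidx]
    have hga : ((L.map (fun x => 1 - x)).reverse).getD t 0 = 1 - L.getD (L.length - (t+1)) 0 := by
      have := dual_getD (L := L) (k := L.length - (t+1)) hpv
      rw [show L.length - 1 - (L.length - (t+1)) = t by omega] at this
      exact this
    have hea : ((L.map (fun x => 1 - x)).reverse).eraseIdx t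
        = ((L.eraseIdx (L.length - (t+1))).map (fun x => 1 - x)).reverse := by
      have := dual_erase (L := L) (k := L.length - (t+1)) hpv
      rw [show L.length - 1 - (L.length - (t+1)) = t by omega] at this
      exact this
    have ha01 := hI _ (mem_getElem L (L.length - (t+1)) hpv)
    have hfa : f (1 - L.getD (L.length - (t+1)) 0) = f (L.getD (L.length - (t+1)) 0) := by
      rw [List.getD_eq_getElem _ _ hpv]
      exact (hf_sym _ ⟨ha01.1, ha01.2⟩).symm
    rw [hga, hea, hfa]
    have hlenE : (L.eraseIdx (L.length - (t+1))).length = L.length - 1 := length_erase hpv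
    have hIe : InI (L.eraseIdx (L.length - (t+1))) := hI.erase _
    -- first inner: W f t (L∖pv)  vs dual at level (L.length - t - 1) + 1
    have inner1 : W f t (L.eraseIdx (L.length - (t+1)))
        = W f ((L.length - t - 1) + 1) (((L.eraseIdx (L.length - (t+1))).map (fun x => 1 - x)).reverse) := by
      rcases Nat.eq_zero_or_pos t with h|h
      · subst h
        rw [W_zero, W_of_lt]
        simp only [List.length_reverse, List.length_map, hlenE]
        omega
      · have := ih (L.eraseIdx (L.length - (t+1))) (by omega) hIe t h (by omega)
        rw [this, hlenE, show L.length - 1 + 1 - t = (L.length - t - 1) + 1 by omega]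
    -- second inner: W f (t+1) (L∖pv) vs dual at level L.length - t - 1
    have inner2 : W f (t+1) (L.eraseIdx (L.length - (t+1)))
        = W f (L.length - t - 1) (((L.eraseIdx (L.length - (t+1))).map (fun x => 1 - x)).reverse) := by
      rcases Nat.lt_or_ge (L.length - 1) (t+1) with h|h
      · rw [W_of_lt f (by omega), show L.length - t - 1 = 0 by omega, W_zero]
      · have := ih (L.eraseIdx (L.length - (t+1))) (by omega) hIe (t+1) (by omega) (by omega)
        rw [this, hlenE, show L.length - 1 + 1 - (t+1) = L.length - t - 1 by omega]
    rw [inner1, inner2]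
    ring

theorem trmW_dual {f : ℝ → ℝ} (hf_sym : ∀ x ∈ Set.Icc (0:ℝ) 1, f x = f (1 - x))
    {L : List ℝ} (hI : InI L) {t k : ℕ} (ht : t + 1 ≤ L.length) (hk : k < L.length) :
    trmW f t L k = trmW f (L.length - t - 1) ((L.map (fun x => 1 - x)).reverse) (L.length - 1 - k) := by
  unfold trmW
  have hga := dual_getD (L := L) hk
  have hea := dual_erase (L := L) hk
  have hk01 := hI _ (mem_getElem L k hk)
  have hfk : f (L.getD k 0) = f (1 - L.getD k 0) := by
    rw [List.getD_eq_getElem _ _ hk]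
    exact hf_sym _ ⟨hk01.1, hk01.2⟩
  have hlenE : (L.eraseIdx k).length = L.length - 1 := length_erase hk
  have hIe : InI (L.eraseIdx k) := hI.erase _
  -- dual of W f (t+1) (L∖k) is level (L.length - t - 1)
  have i1 : W f (L.length - t - 1) (((L.eraseIdx k).map (fun x => 1 - x)).reverse)
      = W f (t+1) (L.eraseIdx k) := by
    rcases Nat.lt_or_ge (L.length - 1) (t+1) with h|h
    · rw [show L.length - t - 1 = 0 by omega, W_zero, W_of_lt f (by omega)]
    · have := W_dual hf_sym (L.eraseIdx k).length (L.eraseIdx k) le_rfl hIe (t+1) (by omega) (by omega)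
      rw [this, hlenE, show L.length - 1 + 1 - (t+1) = L.length - t - 1 by omega]
  have i2 : W f (L.length - t - 1 + 1) (((L.eraseIdx k).map (fun x => 1 - x)).reverse)
      = W f t (L.eraseIdx k) := by
    rcases Nat.eq_zero_or_pos t with h|h
    · subst h
      rw [W_zero, W_of_lt]
      simp only [List.length_reverse, List.length_map, hlenE]
      omega
    · have := W_dual hf_sym (L.eraseIdx k).length (L.eraseIdx k) le_rfl hIe t (by omega) (by omega)
      rw [this, hlenE, show L.length - 1 + 1 - t = L.length - t - 1 + 1 by omega]
  rw [hga, hea, i1, i2, hfk]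
  ring


theorem TW_all {f : ℝ → ℝ} (hf0 : ∀ x ∈ Set.Icc (0:ℝ) 1, 0 ≤ f x)
    (hf_sym : ∀ x ∈ Set.Icc (0:ℝ) 1, f x = f (1 - x))
    (hfm : AntitoneOn (fun x => f x / x) (Set.Ioc (0:ℝ) 1))
    {L : List ℝ} (hS : Srt L) (hI : InI L) {t k : ℕ}
    (ht : t + 1 ≤ L.length) (hk : k < L.length) :
    trmW f t L (L.length - (t+1)) ≤ trmW f t L k := by
  rcases le_or_gt k (L.length - (t+1)) with h|h
  · exact TW_low hf0 hfm hS hI (by omega) h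
  · have hd1 : trmW f t L k
        = trmW f (L.length - t - 1) ((L.map (fun x => 1 - x)).reverse) (L.length - 1 - k) :=
      trmW_dual hf_sym hI ht hk
    have hd2 : trmW f t L (L.length - (t+1))
        = trmW f (L.length - t - 1) ((L.map (fun x => 1 - x)).reverse)
            (L.length - 1 - (L.length - (t+1))) :=
      trmW_dual hf_sym hI ht (by omega)
    rw [hd1, hd2, show L.length - 1 - (L.length - (t+1)) = t by omega]
    have hlen' : ((L.map (fun x => 1 - x)).reverse).length = L.length := by simp
    exact TW_low hf0 hfm (Srt_dual hS) (InI_dual hI)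
      (by rw [hlen']; omega) (by omega)

theorem cost_eq_W {f : ℝ → ℝ} (hf0 : ∀ x ∈ Set.Icc (0:ℝ) 1, 0 ≤ f x)
    (hf_sym : ∀ x ∈ Set.Icc (0:ℝ) 1, f x = f (1 - x))
    (hfm : AntitoneOn (fun x => f x / x) (Set.Ioc (0:ℝ) 1)) :
    ∀ (n : ℕ) (L : List ℝ), L.length ≤ n → Srt L → InI L → ∀ θ : ℕ,
    cost f θ L = W f θ L := by
  intro n
  induction n with
  | zero =>
    intro L hn _ _ θ
    match θ with
    | 0 => rw [cost_zero, W_zero]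
    | (θ+1) => rw [cost_of_lt (by omega), W_of_lt f (by omega)]
  | succ n ih =>
    intro L hn hS hI θ
    match θ with
    | 0 => rw [cost_zero, W_zero]
    | (θ+1) =>
      rcases Nat.lt_or_ge L.length (θ+1) with h|h
      · rw [cost_of_lt h, W_of_lt f h]
      · rw [cost_eq_iInf h]
        have hcong : ∀ i : Fin L.length,
            f (L.get i) + L.get i * cost f θ (L.eraseIdx i.1)
              + (1 - L.get i) * cost f (θ+1) (L.eraseIdx i.1) = trmW f θ L i.1 := by
          intro i
          have e1 := ih (L.eraseIdx i.1) (by rw [length_erase i.2]; omega)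
            (hS.erase _) (hI.erase _) θ
          have e2 := ih (L.eraseIdx i.1) (by rw [length_erase i.2]; omega)
            (hS.erase _) (hI.erase _) (θ+1)
          unfold trmW
          rw [e1, e2, List.getD_eq_getElem _ _ i.2, List.get_eq_getElem]
        rw [iInf_congr hcong]
        haveI : Nonempty (Fin L.length) := ⟨⟨0, by omega⟩⟩
        apply le_antisymm
        · have h2 := ciInf_le (Set.Finite.bddBelow (Set.finite_range (fun i : Fin L.length => trmW f θ L i.1)))
            (⟨L.length - (θ+1), by omega⟩ : Fin L.length)
          rw [W_eq_trmW_pivot f (by omega)]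
          exact h2
        · apply le_ciInf
          intro i
          rw [W_eq_trmW_pivot f (by omega)]
          exact TW_all hf0 hf_sym hfm hS hI (by omega) i.2

end ThresholdDP

open ThresholdDP

/-- Lemma 1 (main DP lemma): for a symmetric cost `f` with `f(p)/p` non-increasing on
`(0,1]`, and sorted probabilities `p_1 ≤ … ≤ p_n`, the index `n - θ + 1` (1-based),
i.e. the 0-based index `n - θ`, attains the minimum in the dynamic-programming
recursion for `C_f(θ; p_1, …, p_n)`. -/
theorem stmt_0 (f : ℝ → ℝ)
    (hf_nonneg : ∀ x ∈ Set.Icc (0:ℝ) 1, 0 ≤ f x)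
    (hf_sym : ∀ x ∈ Set.Icc (0:ℝ) 1, f x = f (1 - x))
    (hf_mono : AntitoneOn (fun x => f x / x) (Set.Ioc (0:ℝ) 1))
    (n : ℕ) (hn : 1 ≤ n) (p : Fin n → ℝ)
    (hp0 : ∀ i, 0 ≤ p i) (hp1 : ∀ i, p i ≤ 1) (hsorted : Monotone p)
    (θ : ℕ) (hθ1 : 1 ≤ θ) (hθn : θ ≤ n) (j : Fin n) :
    f (p ⟨n - θ, by omega⟩)
      + p ⟨n - θ, by omega⟩ * cost f (θ - 1) ((List.ofFn p).eraseIdx (n - θ))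
      + (1 - p ⟨n - θ, by omega⟩) * cost f θ ((List.ofFn p).eraseIdx (n - θ))
    ≤ f (p j) + p j * cost f (θ - 1) ((List.ofFn p).eraseIdx j)
      + (1 - p j) * cost f θ ((List.ofFn p).eraseIdx j) := by
  obtain ⟨t, rfl⟩ : ∃ t, θ = t + 1 := ⟨θ - 1, by omega⟩
  have hlen : (List.ofFn p).length = n := List.length_ofFn
  have hS : Srt (List.ofFn p) := by
    intro a b hab hb
    rw [List.getElem_ofFn, List.getElem_ofFn]
    exact hsorted (show (⟨a, by omega⟩ : Fin n) ≤ ⟨b, by omega⟩ from hab)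
  have hI : InI (List.ofFn p) := by
    intro x hx
    rw [List.mem_ofFn] at hx
    obtain ⟨i, rfl⟩ := hx
    exact ⟨hp0 i, hp1 i⟩
  have hgD : ∀ (k : ℕ) (hk : k < n), p ⟨k, hk⟩ = (List.ofFn p).getD k 0 := by
    intro k hk
    rw [List.getD_eq_getElem _ _ (by omega), List.getElem_ofFn]
  have hcW : ∀ (k : ℕ) (hk : k < n) (ψ : ℕ),
      cost f ψ ((List.ofFn p).eraseIdx k) = W f ψ ((List.ofFn p).eraseIdx k) := by
    intro k hk ψ
    exact cost_eq_W hf_nonneg hf_sym hf_mono ((List.ofFn p).eraseIdx k).length _ le_rfl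
      (hS.erase k) (hI.erase k) ψ
  have hsub : t + 1 - 1 = t := by omega
  have hj1 : (j : ℕ) < n := j.2
  have hpv : n - (t+1) < n := by omega
  rw [hsub, hgD _ hpv, hgD _ hj1, hcW _ hpv, hcW _ hpv, hcW _ hj1, hcW _ hj1]
  have hgoal : trmW f t (List.ofFn p) (n - (t+1)) ≤ trmW f t (List.ofFn p) (j : ℕ) := by
    have := TW_all hf_nonneg hf_sym hf_mono hS hI (t := t) (k := (j : ℕ))
      (by omega) (by omega)
    rwa [hlen] at this
  unfold trmW at hgoal
  convert hgoal using 2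
end

section
/- Let f : [0,1] → [0,∞) satisfy f(p) = f(1−p) for all p ∈ [0,1], with p ↦ f(p)/p non-increasing on (0,1]. Let 0 ≤ p_1 ≤ … ≤ p_m ≤ 1, let 0 ≤ k ≤ m−2 and k+2 ≤ i ≤ m. Then (p_{k+1} − p_i)·C_f(m−k−1; p_{−(k+1,i)}) + (1−p_{k+1})·C_f(m−k; p_{−(k+1)}) − (1−p_i)·C_f(m−k; p_{−i}) ≤ (1−p_{k+1})·f(p_i) − (1−p_i)·f(p_{k+1}), where p_{−(k+1,i)} denotes the list with both entries k+1 and i removed. -/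
theorem gec (l : List ℝ) {i j : ℕ} (h : i = j) {hi : i < l.length} {hj : j < l.length} :
    l[i]'hi = l[j]'hj := by subst h; rfl

theorem myLenErase (l : List ℝ) (i : ℕ) (h : i < l.length) :
    (l.eraseIdx i).length = l.length - 1 := by
  rw [List.length_eraseIdx, if_pos h]

theorem getEraseLt (l : List ℝ) (i j : ℕ) (hj : j < i) (h2 : j < (l.eraseIdx i).length)
    (hb : j < l.length) : (l.eraseIdx i)[j]'h2 = l[j]'hb := by
  rw [List.getElem_eraseIdx]; rw [dif_pos hj]

theorem getEraseGe (l : List ℝ) (i j : ℕ) (hj : ¬ j < i) (h2 : j < (l.eraseIdx i).length)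
    (hb : j + 1 < l.length) : (l.eraseIdx i)[j]'h2 = l[j+1]'hb := by
  rw [List.getElem_eraseIdx]; rw [dif_neg hj]

theorem myEraseIdxMap (g : ℝ → ℝ) (l : List ℝ) (i : ℕ) :
    (l.map g).eraseIdx i = (l.eraseIdx i).map g := by
  apply List.ext_getElem
  · simp [List.length_eraseIdx]
  · intro n h1 h2
    simp only [List.getElem_eraseIdx, List.getElem_map] at *
    split <;> simp [List.getElem_eraseIdx]

theorem myEraseIdxComm (l : List ℝ) (a b : ℕ) (hab : a < b) (hb : b < l.length) :
    (l.eraseIdx b).eraseIdx a = (l.eraseIdx a).eraseIdx (b-1) := by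
  induction l generalizing a b with
  | nil => simp at hb
  | cons x t ih =>
    match a, b with
    | 0, (b'+1) => simp [List.eraseIdx]
    | (a'+1), (b'+1) =>
      simp only [List.eraseIdx_cons_succ, Nat.add_sub_cancel]
      have hb' : b' ≥ 1 := by omega
      rw [show b' = (b'-1) + 1 from by omega, List.eraseIdx_cons_succ]
      congr 1
      have := ih a' (b'-1+1) (by omega) (by simp at hb ⊢; omega)
      simpa using this

theorem myReverseEraseIdx (l : List ℝ) (i : ℕ) (h : i < l.length) :
    l.reverse.eraseIdx i = (l.eraseIdx (l.length - 1 - i)).reverse := by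
  rw [List.eraseIdx_eq_take_drop_succ, List.eraseIdx_eq_take_drop_succ,
    List.take_reverse, List.drop_reverse, List.reverse_append,
    show l.length - (i+1) = l.length - 1 - i from by omega,
    show l.length - 1 - i + 1 = l.length - i from by omega]

theorem memErase (l : List ℝ) (i : ℕ) (hm : ∀ x ∈ l, x ∈ Set.Icc (0:ℝ) 1) :
    ∀ x ∈ l.eraseIdx i, x ∈ Set.Icc (0:ℝ) 1 :=
  fun x hx => hm x ((List.eraseIdx_sublist l i).subset hx)

theorem sortErase (l : List ℝ) (i : ℕ) (hs : l.Pairwise (· ≤ ·)) :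
    (l.eraseIdx i).Pairwise (· ≤ ·) :=
  hs.sublist (List.eraseIdx_sublist l i)

theorem cost_zero (f : ℝ → ℝ) (l : List ℝ) : cost f 0 l = 0 := by rw [cost]

theorem cost_succ (f : ℝ → ℝ) (θ : ℕ) (l : List ℝ) (h : ¬ l.length < θ + 1) :
    cost f (θ+1) l = ⨅ i : Fin l.length,
        (f (l.get i) + l.get i * cost f θ (l.eraseIdx i.1)
          + (1 - l.get i) * cost f (θ+1) (l.eraseIdx i.1)) := by
  rw [cost, if_neg h]

theorem cost_big (f : ℝ → ℝ) (θ : ℕ) (l : List ℝ) (h : l.length < θ) : cost f θ l = 0 := by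
  match θ with
  | θ'+1 => rw [cost, if_pos h]

theorem cost_nil (f : ℝ → ℝ) (θ : ℕ) : cost f θ [] = 0 := by
  match θ with
  | 0 => rw [cost_zero]
  | θ'+1 => rw [cost_big f _ _ (by simp)]

section withF
variable {f : ℝ → ℝ}

theorem cost_nonneg (hf0 : ∀ x ∈ Set.Icc (0:ℝ) 1, 0 ≤ f x) : ∀ (n : ℕ) (l : List ℝ), l.length ≤ n →
    (∀ x ∈ l, x ∈ Set.Icc (0:ℝ) 1) → ∀ θ, 0 ≤ cost f θ l := by
  intro n
  induction n with
  | zero =>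
    intro l hl hm θ
    match θ with
    | 0 => rw [cost_zero]
    | (θ'+1) => rw [cost_big f _ l (by omega)]
  | succ n ih =>
    intro l hl hm θ
    match θ with
    | 0 => rw [cost_zero]
    | (θ'+1) =>
      by_cases hb : l.length < θ' + 1
      · rw [cost_big f _ l hb]
      · rw [cost_succ f θ' l hb]
        have hne : Nonempty (Fin l.length) := ⟨⟨0, by omega⟩⟩
        apply le_ciInf
        intro i
        have hmem : l.get i ∈ Set.Icc (0:ℝ) 1 := hm _ (by simp only [List.get_eq_getElem]; exact List.getElem_mem i.isLt)
        have h1 : (l.eraseIdx i.1).length ≤ n := by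
          rw [myLenErase l i.1 i.isLt]; omega
        have h2 := memErase l i.1 hm
        have c1 := ih _ h1 h2 θ'
        have c2 := ih _ h1 h2 (θ'+1)
        have := hf0 _ hmem
        have h01 := hmem.1
        have h02 := hmem.2
        nlinarith [mul_nonneg h01 c1, mul_nonneg (by linarith : (0:ℝ) ≤ 1 - l.get i) c2]

theorem cost_nonneg' (hf0 : ∀ x ∈ Set.Icc (0:ℝ) 1, 0 ≤ f x) (l : List ℝ) (hm : ∀ x ∈ l, x ∈ Set.Icc (0:ℝ) 1) (θ : ℕ) :
    0 ≤ cost f θ l := cost_nonneg hf0 l.length l le_rfl hm θ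

theorem bddE (hf0 : ∀ x ∈ Set.Icc (0:ℝ) 1, 0 ≤ f x) (l : List ℝ) (hm : ∀ x ∈ l, x ∈ Set.Icc (0:ℝ) 1) (θ : ℕ) :
    BddBelow (Set.range fun i : Fin l.length =>
      (f (l.get i) + l.get i * cost f θ (l.eraseIdx i.1)
          + (1 - l.get i) * cost f (θ+1) (l.eraseIdx i.1))) := by
  refine ⟨0, ?_⟩
  rintro x ⟨i, rfl⟩
  dsimp only
  have hmem : l.get i ∈ Set.Icc (0:ℝ) 1 := hm _ (by simp only [List.get_eq_getElem]; exact List.getElem_mem i.isLt)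
  have h2 := memErase l i.1 hm
  have c1 := cost_nonneg' hf0 _ h2 θ
  have c2 := cost_nonneg' hf0 _ h2 (θ+1)
  have := hf0 _ hmem
  nlinarith [mul_nonneg hmem.1 c1, mul_nonneg (by linarith [hmem.2] : (0:ℝ) ≤ 1 - l.get i) c2]

theorem cost_le_query (hf0 : ∀ x ∈ Set.Icc (0:ℝ) 1, 0 ≤ f x) (l : List ℝ) (hm : ∀ x ∈ l, x ∈ Set.Icc (0:ℝ) 1)
    (θ : ℕ) (hθ : 1 ≤ θ) (j : ℕ) (hj : j < l.length) :
    cost f θ l ≤ f (l[j]'hj) + (l[j]'hj) * cost f (θ-1) (l.eraseIdx j)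
      + (1 - l[j]'hj) * cost f θ (l.eraseIdx j) := by
  obtain ⟨θ', rfl⟩ : ∃ θ', θ = θ' + 1 := ⟨θ - 1, by omega⟩
  by_cases hb : l.length < θ' + 1
  · rw [cost_big f _ l hb]
    have hmem : l[j]'hj ∈ Set.Icc (0:ℝ) 1 := hm _ (List.getElem_mem hj)
    have h2 := memErase l j hm
    have c1 := cost_nonneg' hf0 _ h2 (θ'+1-1)
    have c2 := cost_nonneg' hf0 _ h2 (θ'+1)
    have := hf0 _ hmem
    nlinarith [mul_nonneg hmem.1 c1, mul_nonneg (by linarith [hmem.2] : (0:ℝ) ≤ 1 - l[j]'hj) c2]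
  · rw [cost_succ f θ' l hb]
    have h := ciInf_le (bddE hf0 l hm θ') ⟨j, hj⟩
    simp only [List.get_eq_getElem] at h
    simpa using h

end withF

theorem dual_mem (l : List ℝ) (hm : ∀ x ∈ l, x ∈ Set.Icc (0:ℝ) 1) :
    ∀ x ∈ ((l.map (fun t => 1 - t)).reverse), x ∈ Set.Icc (0:ℝ) 1 := by
  intro x hx
  rw [List.mem_reverse, List.mem_map] at hx
  obtain ⟨y, hy, rfl⟩ := hx
  have := hm y hy
  constructor <;> [linarith [this.2]; linarith [this.1]]

theorem cost_dual {f : ℝ → ℝ} (hf0 : ∀ x ∈ Set.Icc (0:ℝ) 1, 0 ≤ f x)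
    (hf_sym : ∀ x ∈ Set.Icc (0:ℝ) 1, f x = f (1 - x)) :
    ∀ (n : ℕ) (l : List ℝ), l.length ≤ n → (∀ x ∈ l, x ∈ Set.Icc (0:ℝ) 1) → ∀ θ : ℕ,
      cost f θ l = cost f (l.length + 1 - θ) ((l.map (fun t => 1 - t)).reverse) := by
  intro n
  induction n with
  | zero =>
    intro l hl hm θ
    have : l = [] := List.length_eq_zero_iff.mp (by omega)
    subst this
    simp only [List.map_nil, List.reverse_nil, cost_nil]
  | succ n ih =>
    intro l hl hm θ
    set Q := (l.map (fun t => 1 - t)).reverse with hQ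
    have hQlen : Q.length = l.length := by simp [hQ]
    have hmQ := dual_mem l hm
    match θ with
    | 0 =>
      rw [cost_zero, cost_big]
      omega
    | (θ'+1) =>
      by_cases hb : l.length < θ' + 1
      · rw [cost_big _ _ _ hb]
        have : l.length + 1 - (θ'+1) = l.length - θ' := by omega
        rw [this]
        rcases Nat.eq_or_lt_of_le (Nat.zero_le (l.length - θ')) with h | h
        · rw [← h, cost_zero]
        · rw [cost_big _ _ _ (by omega)]
      · -- main case
        set m := l.length with hm'
        have hθm : θ' + 1 ≤ m := by omega
        set τ' := m - θ' - 1 with hτ'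
        have hτeq : m + 1 - (θ'+1) = τ' + 1 := by omega
        rw [hτeq, cost_succ f θ' l hb, cost_succ f τ' Q (by omega)]
        -- key equality
        have key : ∀ (jj kk : ℕ) (hsum : jj + kk = m - 1) (hjj : jj < m) (hkk : kk < Q.length),
            f (Q.get ⟨kk, hkk⟩) + Q.get ⟨kk, hkk⟩ * cost f τ' (Q.eraseIdx kk)
              + (1 - Q.get ⟨kk, hkk⟩) * cost f (τ'+1) (Q.eraseIdx kk)
            = f (l.get ⟨jj, hjj⟩) + l.get ⟨jj, hjj⟩ * cost f θ' (l.eraseIdx jj)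
              + (1 - l.get ⟨jj, hjj⟩) * cost f (θ'+1) (l.eraseIdx jj) := by
          intro jj kk hsum hjj hkk
          have e0 : l[l.length - 1 - kk]'(by omega) = l[jj]'hjj := gec l (by omega)
          have e1 : Q.get ⟨kk, hkk⟩ = 1 - l.get ⟨jj, hjj⟩ := by
            simp only [List.get_eq_getElem, hQ, List.getElem_reverse, List.getElem_map,
              List.length_map]
            rw [e0]
          have e2 : Q.eraseIdx kk = ((l.eraseIdx jj).map (fun t => 1 - t)).reverse := by
            rw [hQ, myReverseEraseIdx (l.map (fun t => 1 - t)) kk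
                (by simp only [List.length_map]; omega),
              show (l.map (fun t => 1 - t)).length - 1 - kk = jj from by
                simp only [List.length_map]; omega,
              myEraseIdxMap]
          have hLe : (l.eraseIdx jj).length = m - 1 := myLenErase l jj hjj
          have hmz := memErase l jj hm
          have i1 : cost f θ' (l.eraseIdx jj)
              = cost f (τ'+1) ((l.eraseIdx jj).map (fun t => 1 - t)).reverse := by
            have := ih (l.eraseIdx jj) (by omega) hmz θ'
            rwa [hLe, show m - 1 + 1 - θ' = τ' + 1 from by omega] at this
          have i2 : cost f (θ'+1) (l.eraseIdx jj)
              = cost f τ' ((l.eraseIdx jj).map (fun t => 1 - t)).reverse := by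
            have := ih (l.eraseIdx jj) (by omega) hmz (θ'+1)
            rwa [hLe, show m - 1 + 1 - (θ'+1) = τ' from by omega] at this
          have e3 : f (Q.get ⟨kk, hkk⟩) = f (l.get ⟨jj, hjj⟩) := by
            rw [e1]
            have hmem : l.get ⟨jj, hjj⟩ ∈ Set.Icc (0:ℝ) 1 := hm _ (by
              simp only [List.get_eq_getElem]; exact List.getElem_mem hjj)
            rw [← hf_sym _ hmem]
          rw [e3, e1, e2, i1, i2]
          ring
        have hne1 : Nonempty (Fin Q.length) := ⟨⟨0, by omega⟩⟩
        have hne2 : Nonempty (Fin l.length) := ⟨⟨0, by omega⟩⟩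
        apply _root_.le_antisymm
        · apply le_ciInf
          intro jfin
          have hkk : m - 1 - jfin.1 < Q.length := by have := jfin.isLt; omega
          calc (⨅ i : Fin l.length, (f (l.get i) + l.get i * cost f θ' (l.eraseIdx i.1)
                  + (1 - l.get i) * cost f (θ'+1) (l.eraseIdx i.1)))
              ≤ _ := ciInf_le (bddE hf0 l hm θ') ⟨m - 1 - jfin.1, by have := jfin.isLt; omega⟩
            _ = _ := (key (m - 1 - jfin.1) jfin.1 (by have := jfin.isLt; omega)
                (by have := jfin.isLt; omega) jfin.isLt).symm
        · apply le_ciInf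
          intro ifin
          calc (⨅ j : Fin Q.length, (f (Q.get j) + Q.get j * cost f τ' (Q.eraseIdx j.1)
                  + (1 - Q.get j) * cost f (τ'+1) (Q.eraseIdx j.1)))
              ≤ _ := ciInf_le (bddE hf0 Q hmQ τ') ⟨m - 1 - ifin.1, by have := ifin.isLt; omega⟩
            _ = _ := key ifin.1 (m - 1 - ifin.1) (by have := ifin.isLt; omega) ifin.isLt
                (by have := ifin.isLt; omega)

/-- key inequality on f: for x ≤ y in [0,1], (1-y) f x ≤ (1-x) f y -/
theorem fkey {f : ℝ → ℝ} (hf0 : ∀ x ∈ Set.Icc (0:ℝ) 1, 0 ≤ f x)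
    (hf_sym : ∀ x ∈ Set.Icc (0:ℝ) 1, f x = f (1 - x))
    (hf_mono : AntitoneOn (fun x => f x / x) (Set.Ioc (0:ℝ) 1))
    (x y : ℝ) (hx : x ∈ Set.Icc (0:ℝ) 1) (hy : y ∈ Set.Icc (0:ℝ) 1) (hxy : x ≤ y) :
    (1 - y) * f x ≤ (1 - x) * f y := by
  rcases eq_or_lt_of_le hy.2 with h1 | h1
  · rw [h1]
    have hf1 : 0 ≤ f 1 := hf0 1 (by norm_num)
    have := hf0 x hx
    nlinarith [hx.2, hx.1]
  · have h1y : (1:ℝ) - y ∈ Set.Ioc (0:ℝ) 1 := ⟨by linarith, by linarith [hy.1]⟩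
    have h1x : (1:ℝ) - x ∈ Set.Ioc (0:ℝ) 1 := ⟨by linarith, by linarith [hx.1]⟩
    have hmono := hf_mono h1y h1x (by linarith)
    simp only at hmono
    rw [← hf_sym x hx, ← hf_sym y hy] at hmono
    rw [div_le_div_iff₀ (by linarith) (by linarith)] at hmono
    linarith

def AS (f : ℝ → ℝ) (n : ℕ) : Prop :=
  ∀ l : List ℝ, l.length = n → l.Pairwise (· ≤ ·) → (∀ x ∈ l, x ∈ Set.Icc (0:ℝ) 1) →
  ∀ θ c : ℕ, θ + c = n → 1 ≤ θ → ∀ (hc : c < l.length),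
    cost f θ l = f (l[c]'hc) + (l[c]'hc) * cost f (θ-1) (l.eraseIdx c)
      + (1 - l[c]'hc) * cost f θ (l.eraseIdx c)

def BS (f : ℝ → ℝ) (n : ℕ) : Prop :=
  ∀ l : List ℝ, l.length = n → l.Pairwise (· ≤ ·) → (∀ x ∈ l, x ∈ Set.Icc (0:ℝ) 1) →
  ∀ θ a b : ℕ, θ + a = n → a < b → ∀ (hb : b < l.length) (ha : a < l.length),
    (l[a]'ha - l[b]'hb) * cost f (θ-1) ((l.eraseIdx b).eraseIdx a)
      + (1 - l[a]'ha) * cost f θ (l.eraseIdx a)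
      - (1 - l[b]'hb) * cost f θ (l.eraseIdx b)
    ≤ (1 - l[a]'ha) * f (l[b]'hb) - (1 - l[b]'hb) * f (l[a]'ha)

def WS (f : ℝ → ℝ) (n : ℕ) : Prop :=
  ∀ l : List ℝ, l.length = n → l.Pairwise (· ≤ ·) → (∀ x ∈ l, x ∈ Set.Icc (0:ℝ) 1) →
  ∀ θ a b : ℕ, θ + a + 1 = n → a < b → ∀ (hb : b < l.length) (ha : a < l.length),
    (l[a]'ha - l[b]'hb) * cost f (θ-1) ((l.eraseIdx b).eraseIdx a)
      + (1 - l[a]'ha) * cost f θ (l.eraseIdx a)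
      - (1 - l[b]'hb) * cost f θ (l.eraseIdx b)
    ≤ (1 - l[a]'ha) * f (l[b]'hb) - (1 - l[b]'hb) * f (l[a]'ha)

theorem sorted_le {l : List ℝ} (hsort : l.Pairwise (· ≤ ·)) {a b : ℕ} (hab : a < b)
    (hb : b < l.length) (ha : a < l.length) : l[a]'ha ≤ l[b]'hb :=
  List.pairwise_iff_getElem.mp hsort a b ha hb hab

theorem Wlem {f : ℝ → ℝ} (hf0 : ∀ x ∈ Set.Icc (0:ℝ) 1, 0 ≤ f x)
    (n : ℕ) (hA : AS f (n-1)) : WS f n := by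
  intro l hlen hsort hicc θ a b hθa hab hb ha
  have hθ1 : 1 ≤ θ := by omega
  have hLb : (l.eraseIdx b).length = n - 1 := by rw [myLenErase l b hb]; omega
  have hLa : (l.eraseIdx a).length = n - 1 := by rw [myLenErase l a ha]; omega
  have hq : l[a]'ha ∈ Set.Icc (0:ℝ) 1 := hicc _ (List.getElem_mem ha)
  have hr : l[b]'hb ∈ Set.Icc (0:ℝ) 1 := hicc _ (List.getElem_mem hb)
  -- step 1: optimal expansion of cost θ (l.eraseIdx b) at element l[a]
  have step1 := hA (l.eraseIdx b) hLb (sortErase l b hsort) (memErase l b hicc)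
    θ a (by omega) hθ1 (by omega)
  rw [getEraseLt l b a hab (by omega) ha] at step1
  -- step 2: upper bound for cost θ (l.eraseIdx a) by querying l[b] (index b-1)
  have step2 := cost_le_query hf0 (l.eraseIdx a) (memErase l a hicc) θ hθ1 (b-1) (by omega)
  rw [getEraseGe l a (b-1) (by omega) (by omega) (by omega : b - 1 + 1 < l.length)] at step2
  rw [gec l (hj := hb) (show b - 1 + 1 = b from by omega)] at step2
  rw [← myEraseIdxComm l a b hab hb] at step2
  rw [step1]
  have h1u : (0:ℝ) ≤ 1 - l[a]'ha := by linarith [hq.2]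
  have hmul := mul_le_mul_of_nonneg_left step2 h1u
  nlinarith [hmul]

theorem Blem {f : ℝ → ℝ} (hf0 : ∀ x ∈ Set.Icc (0:ℝ) 1, 0 ≤ f x)
    (hf_sym : ∀ x ∈ Set.Icc (0:ℝ) 1, f x = f (1 - x))
    (hf_mono : AntitoneOn (fun x => f x / x) (Set.Ioc (0:ℝ) 1))
    (n : ℕ) (hA1 : AS f (n-1)) (hA2 : AS f (n-1-1)) (hB1 : BS f (n-1))
    (hW1 : WS f (n-1)) : BS f n := by
  intro l hlen hsort hicc θ a b hθa hab hb ha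
  have hq : l[a]'ha ∈ Set.Icc (0:ℝ) 1 := hicc _ (List.getElem_mem ha)
  have hr : l[b]'hb ∈ Set.Icc (0:ℝ) 1 := hicc _ (List.getElem_mem hb)
  have hqr : l[a]'ha ≤ l[b]'hb := sorted_le hsort hab hb ha
  have hLb : (l.eraseIdx b).length = n - 1 := by rw [myLenErase l b hb]; omega
  have hLa : (l.eraseIdx a).length = n - 1 := by rw [myLenErase l a ha]; omega
  have hLba : ((l.eraseIdx b).eraseIdx a).length = n - 2 := by
    rw [myLenErase _ a (by omega), hLb]; omega
  rcases Nat.eq_zero_or_pos a with rfl | hapos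
  · -- base case a = 0, θ = n
    have hz1 : cost f (θ-1) ((l.eraseIdx b).eraseIdx 0) = 0 :=
      cost_big f _ _ (by omega)
    have hz2 : cost f θ (l.eraseIdx 0) = 0 := cost_big f _ _ (by omega)
    have hz3 : cost f θ (l.eraseIdx b) = 0 := cost_big f _ _ (by omega)
    rw [hz1, hz2, hz3]
    have := fkey hf0 hf_sym hf_mono _ _ hq hr hqr
    linarith
  · -- inductive case a ≥ 1
    have hθ2 : 2 ≤ θ := by omega
    have ha1 : a - 1 < l.length := by omega
    set l' := l.eraseIdx (a-1) with hl'
    have hL' : l'.length = n - 1 := by rw [hl', myLenErase l (a-1) ha1]; omega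
    have hL2 : (l.eraseIdx (a-1)).length = n - 1 := by
      rw [myLenErase l (a-1) ha1]; omega
    have hsort' : l'.Pairwise (· ≤ ·) := sortErase l (a-1) hsort
    have hicc' : ∀ x ∈ l', x ∈ Set.Icc (0:ℝ) 1 := memErase l (a-1) hicc
    have hs : l[a-1]'ha1 ∈ Set.Icc (0:ℝ) 1 := hicc _ (List.getElem_mem ha1)
    -- expansion e1 : cost θ (l.eraseIdx a)
    have e1 := hA1 (l.eraseIdx a) hLa (sortErase l a hsort) (memErase l a hicc)
      θ (a-1) (by omega) (by omega) (by omega)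
    rw [getEraseLt l a (a-1) (by omega) (by omega) ha1] at e1
    rw [myEraseIdxComm l (a-1) a (by omega) ha] at e1
    -- e2 : cost θ (l.eraseIdx b)
    have e2 := hA1 (l.eraseIdx b) hLb (sortErase l b hsort) (memErase l b hicc)
      θ (a-1) (by omega) (by omega) (by omega)
    rw [getEraseLt l b (a-1) (by omega) (by omega) ha1] at e2
    rw [myEraseIdxComm l (a-1) b (by omega) hb] at e2
    -- e3 : cost (θ-1) ((l.eraseIdx b).eraseIdx a)
    have e3 := hA2 ((l.eraseIdx b).eraseIdx a) (by omega)
      (sortErase _ (a) (sortErase l b hsort)) (memErase _ a (memErase l b hicc))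
      (θ-1) (a-1) (by omega) (by omega) (by omega)
    rw [getEraseLt (l.eraseIdx b) a (a-1) (by omega) (by omega) (by omega)] at e3
    rw [getEraseLt l b (a-1) (by omega) (by omega) ha1] at e3
    rw [myEraseIdxComm (l.eraseIdx b) (a-1) a (by omega) (by omega)] at e3
    rw [myEraseIdxComm l (a-1) b (by omega) hb] at e3
    -- children
    have c2 := hB1 l' hL' hsort' hicc' θ (a-1) (b-1) (by omega) (by omega)
      (by omega) (by omega)
    rw [getEraseGe l (a-1) (a-1) (by omega) (by omega) (by omega : a - 1 + 1 < l.length)] at c2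
    rw [gec l (hj := ha) (show a - 1 + 1 = a from by omega)] at c2
    rw [getEraseGe l (a-1) (b-1) (by omega) (by omega) (by omega : b - 1 + 1 < l.length)] at c2
    rw [gec l (hj := hb) (show b - 1 + 1 = b from by omega)] at c2
    have c1 := hW1 l' hL' hsort' hicc' (θ-1) (a-1) (b-1) (by omega) (by omega)
      (by omega) (by omega)
    rw [getEraseGe l (a-1) (a-1) (by omega) (by omega) (by omega : a - 1 + 1 < l.length)] at c1
    rw [gec l (hj := ha) (show a - 1 + 1 = a from by omega)] at c1
    rw [getEraseGe l (a-1) (b-1) (by omega) (by omega) (by omega : b - 1 + 1 < l.length)] at c1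
    rw [gec l (hj := hb) (show b - 1 + 1 = b from by omega)] at c1
    -- put together
    rw [e1, e2, e3]
    have hs0 : (0:ℝ) ≤ l[a-1]'ha1 := hs.1
    have h1s : (0:ℝ) ≤ 1 - l[a-1]'ha1 := by linarith [hs.2]
    have hm1 := mul_le_mul_of_nonneg_left c1 hs0
    have hm2 := mul_le_mul_of_nonneg_left c2 h1s
    linarith [hm1, hm2]

theorem dual_sorted (l : List ℝ) (hsort : l.Pairwise (· ≤ ·)) :
    ((l.map (fun t => 1 - t)).reverse).Pairwise (· ≤ ·) := by
  rw [List.pairwise_iff_getElem]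
  intro i j hi hj hij
  have hi' : i < l.length := by simpa using hi
  have hj' : j < l.length := by simpa using hj
  simp only [List.getElem_reverse, List.getElem_map, List.length_map]
  have h1 : l.length - 1 - j < l.length := by omega
  have h2 : l.length - 1 - i < l.length := by omega
  have := List.pairwise_iff_getElem.mp hsort (l.length - 1 - j) (l.length - 1 - i)
    h1 h2 (by omega)
  linarith

theorem Edual {f : ℝ → ℝ} (hf0 : ∀ x ∈ Set.Icc (0:ℝ) 1, 0 ≤ f x)
    (hf_sym : ∀ x ∈ Set.Icc (0:ℝ) 1, f x = f (1 - x))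
    (l : List ℝ) (hicc : ∀ x ∈ l, x ∈ Set.Icc (0:ℝ) 1)
    (θ τ j j' : ℕ) (hθτ : θ + τ = l.length + 1) (hθ1 : 1 ≤ θ) (hθn : θ ≤ l.length)
    (hjj' : j + j' = l.length - 1) (hj : j < l.length)
    (hj' : j' < ((l.map (fun t => 1 - t)).reverse).length) :
    f (l[j]'hj) + (l[j]'hj) * cost f (θ-1) (l.eraseIdx j)
      + (1 - l[j]'hj) * cost f θ (l.eraseIdx j)
    = f (((l.map (fun t => 1 - t)).reverse)[j']'hj')
      + (((l.map (fun t => 1 - t)).reverse)[j']'hj')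
          * cost f (τ-1) (((l.map (fun t => 1 - t)).reverse).eraseIdx j')
      + (1 - ((l.map (fun t => 1 - t)).reverse)[j']'hj')
          * cost f τ (((l.map (fun t => 1 - t)).reverse).eraseIdx j') := by
  have hQlen : ((l.map (fun t => 1 - t)).reverse).length = l.length := by simp
  have e0 : l[l.length - 1 - j']'(by omega) = l[j]'hj := gec l (by omega)
  have e1 : ((l.map (fun t => 1 - t)).reverse)[j']'hj' = 1 - l[j]'hj := by
    simp only [List.getElem_reverse, List.getElem_map, List.length_map]
    rw [e0]
  have e2 : ((l.map (fun t => 1 - t)).reverse).eraseIdx j'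
      = ((l.eraseIdx j).map (fun t => 1 - t)).reverse := by
    rw [myReverseEraseIdx (l.map (fun t => 1 - t)) j' (by simp only [List.length_map]; omega),
      show (l.map (fun t => 1 - t)).length - 1 - j' = j from by
        simp only [List.length_map]; omega,
      myEraseIdxMap]
  have hLe : (l.eraseIdx j).length = l.length - 1 := myLenErase l j hj
  have hmz := memErase l j hicc
  have i1 : cost f (θ-1) (l.eraseIdx j)
      = cost f τ ((l.eraseIdx j).map (fun t => 1 - t)).reverse := by
    have := cost_dual hf0 hf_sym (l.eraseIdx j).length (l.eraseIdx j) le_rfl hmz (θ-1)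
    rwa [hLe, show l.length - 1 + 1 - (θ-1) = τ from by omega] at this
  have i2 : cost f θ (l.eraseIdx j)
      = cost f (τ-1) ((l.eraseIdx j).map (fun t => 1 - t)).reverse := by
    have := cost_dual hf0 hf_sym (l.eraseIdx j).length (l.eraseIdx j) le_rfl hmz θ
    rwa [hLe, show l.length - 1 + 1 - θ = τ - 1 from by omega] at this
  have hmem : l[j]'hj ∈ Set.Icc (0:ℝ) 1 := hicc _ (List.getElem_mem hj)
  have e3 : f (((l.map (fun t => 1 - t)).reverse)[j']'hj') = f (l[j]'hj) := by
    rw [e1, ← hf_sym _ hmem]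
  rw [e3, e1, e2, i1, i2]
  ring

theorem halfA {f : ℝ → ℝ} (hf0 : ∀ x ∈ Set.Icc (0:ℝ) 1, 0 ≤ f x)
    (n : ℕ) (hB : BS f n) (hA1 : AS f (n-1)) :
    ∀ l : List ℝ, l.length = n → l.Pairwise (· ≤ ·) → (∀ x ∈ l, x ∈ Set.Icc (0:ℝ) 1) →
    ∀ θ c j : ℕ, θ + c = n → 1 ≤ θ → c < j → ∀ (hj : j < l.length) (hc : c < l.length),
    f (l[c]'hc) + (l[c]'hc) * cost f (θ-1) (l.eraseIdx c)
      + (1 - l[c]'hc) * cost f θ (l.eraseIdx c)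
    ≤ f (l[j]'hj) + (l[j]'hj) * cost f (θ-1) (l.eraseIdx j)
      + (1 - l[j]'hj) * cost f θ (l.eraseIdx j) := by
  intro l hlen hsort hicc θ c j hθc hθ1 hcj hj hc
  have hθ2 : 2 ≤ θ := by omega
  have hx : l[c]'hc ∈ Set.Icc (0:ℝ) 1 := hicc _ (List.getElem_mem hc)
  have hy : l[j]'hj ∈ Set.Icc (0:ℝ) 1 := hicc _ (List.getElem_mem hj)
  have hLj : (l.eraseIdx j).length = n - 1 := by rw [myLenErase l j hj]; omega
  have hLc : (l.eraseIdx c).length = n - 1 := by rw [myLenErase l c hc]; omega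
  -- step 1 : B inequality with pair (c, j)
  have step1 := hB l hlen hsort hicc θ c j hθc hcj hj hc
  -- step 2 : A expansion of cost (θ-1) (l.eraseIdx j) at index c
  have step2 := hA1 (l.eraseIdx j) hLj (sortErase l j hsort) (memErase l j hicc)
    (θ-1) c (by omega) (by omega) (by omega)
  rw [getEraseLt l j c hcj (by omega) hc] at step2
  -- step 3 : upper bound of cost (θ-1) (l.eraseIdx c) by querying l[j] (index j-1)
  have step3 := cost_le_query hf0 (l.eraseIdx c) (memErase l c hicc) (θ-1)
    (by omega) (j-1) (by omega)
  rw [getEraseGe l c (j-1) (by omega) (by omega) (by omega : j - 1 + 1 < l.length)] at step3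
  rw [gec l (hj := hj) (show j - 1 + 1 = j from by omega)] at step3
  rw [← myEraseIdxComm l c j hcj hj] at step3
  have h2y : (l[j]'hj) * cost f (θ-1) (l.eraseIdx j)
      = (l[j]'hj) * (f (l[c]'hc)
        + (l[c]'hc) * cost f (θ-1-1) ((l.eraseIdx j).eraseIdx c)
        + (1 - l[c]'hc) * cost f (θ-1) ((l.eraseIdx j).eraseIdx c)) := by rw [step2]
  have h3x := mul_le_mul_of_nonneg_left step3 hx.1
  linarith [step1, h2y, h3x]

theorem Alem {f : ℝ → ℝ} (hf0 : ∀ x ∈ Set.Icc (0:ℝ) 1, 0 ≤ f x)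
    (hf_sym : ∀ x ∈ Set.Icc (0:ℝ) 1, f x = f (1 - x))
    (n : ℕ) (hB : BS f n) (hA1 : AS f (n-1)) : AS f n := by
  intro l hlen hsort hicc θ c hθc hθ1 hc
  obtain ⟨θ', rfl⟩ : ∃ θ', θ = θ' + 1 := ⟨θ - 1, by omega⟩
  rw [cost_succ f θ' l (by omega)]
  simp only [Nat.add_sub_cancel]
  apply _root_.le_antisymm
  · have h := ciInf_le (bddE hf0 l hicc θ') ⟨c, hc⟩
    simp only [List.get_eq_getElem] at h
    exact h
  · have hne : Nonempty (Fin l.length) := ⟨⟨c, hc⟩⟩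
    apply le_ciInf
    intro i
    simp only [List.get_eq_getElem]
    rcases lt_trichotomy c i.1 with h | h | h
    · have := halfA hf0 n hB hA1 l hlen hsort hicc (θ'+1) c i.1 hθc hθ1 h i.isLt hc
      simpa using this
    · -- equal
      apply le_of_eq
      have hgeq : l[c]'hc = l[i.1]'i.isLt := gec l h
      rw [hgeq, h]
    · -- c > i : duality
      have hQlen : ((l.map (fun t => 1 - t)).reverse).length = l.length := by simp
      have hQsort := dual_sorted l hsort
      have hQicc := dual_mem l hicc
      have hd1 := Edual hf0 hf_sym l hicc (θ'+1) (l.length + 1 - (θ'+1)) c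
        (l.length - 1 - c) (by omega) (by omega) (by omega) (by omega) hc (by omega)
      have hd2 := Edual hf0 hf_sym l hicc (θ'+1) (l.length + 1 - (θ'+1)) i.1
        (l.length - 1 - i.1) (by omega) (by omega) (by omega) (by omega) i.isLt (by omega)
      simp only [Nat.add_sub_cancel] at hd1 hd2
      rw [hd1, hd2]
      exact halfA hf0 n hB hA1 ((l.map (fun t => 1 - t)).reverse) (by omega) hQsort hQicc
        (l.length + 1 - (θ'+1)) (l.length - 1 - c) (l.length - 1 - i.1)
        (by omega) (by omega) (by omega) (by omega) (by omega)

theorem master {f : ℝ → ℝ} (hf0 : ∀ x ∈ Set.Icc (0:ℝ) 1, 0 ≤ f x)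
    (hf_sym : ∀ x ∈ Set.Icc (0:ℝ) 1, f x = f (1 - x))
    (hf_mono : AntitoneOn (fun x => f x / x) (Set.Ioc (0:ℝ) 1)) :
    ∀ n : ℕ, AS f n ∧ BS f n := by
  intro n
  induction n using Nat.strong_induction_on with
  | _ n IH =>
    have hA1 : AS f (n-1) := by
      rcases Nat.eq_zero_or_pos n with rfl | hn
      · intro l hlen hs hi θ c hθc hθ1 hc
        exact absurd hθc (by omega)
      · exact (IH (n-1) (by omega)).1
    have hA2 : AS f (n-1-1) := by
      rcases lt_or_ge n 2 with hn | hn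
      · intro l hlen hs hi θ c hθc hθ1 hc
        exact absurd hθc (by omega)
      · exact (IH (n-1-1) (by omega)).1
    have hB1 : BS f (n-1) := by
      rcases Nat.eq_zero_or_pos n with rfl | hn
      · intro l hlen hs hi θ a b hθa hab hb ha
        rw [hlen] at hb
        exact absurd hb (by omega)
      · exact (IH (n-1) (by omega)).2
    have hW1 : WS f (n-1) := Wlem hf0 (n-1) hA2
    have hBn : BS f n := Blem hf0 hf_sym hf_mono n hA1 hA2 hB1 hW1
    exact ⟨Alem hf0 hf_sym n hBn hA1, hBn⟩


/-- Part (b) of the loaded induction hypothesis in Lemma 1: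
the quantity `S¹_{m,k,i}` is bounded by `(1-p_{k+1}) f(p_i) - (1-p_i) f(p_{k+1})`
for `0 ≤ k ≤ m-2` and `k+2 ≤ i ≤ m` (1-based indices). -/
theorem stmt_1 (f : ℝ → ℝ)
    (hf_nonneg : ∀ x ∈ Set.Icc (0:ℝ) 1, 0 ≤ f x)
    (hf_sym : ∀ x ∈ Set.Icc (0:ℝ) 1, f x = f (1 - x))
    (hf_mono : AntitoneOn (fun x => f x / x) (Set.Ioc (0:ℝ) 1))
    (m : ℕ) (p : Fin m → ℝ)
    (hp0 : ∀ i, 0 ≤ p i) (hp1 : ∀ i, p i ≤ 1) (hsorted : Monotone p)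
    (k i : ℕ) (hk : k + 2 ≤ m) (hki : k + 2 ≤ i) (him : i ≤ m) :
    (p ⟨k, by omega⟩ - p ⟨i - 1, by omega⟩) *
        cost f (m - k - 1) (((List.ofFn p).eraseIdx (i - 1)).eraseIdx k)
      + (1 - p ⟨k, by omega⟩) * cost f (m - k) ((List.ofFn p).eraseIdx k)
      - (1 - p ⟨i - 1, by omega⟩) * cost f (m - k) ((List.ofFn p).eraseIdx (i - 1))
    ≤ (1 - p ⟨k, by omega⟩) * f (p ⟨i - 1, by omega⟩)
      - (1 - p ⟨i - 1, by omega⟩) * f (p ⟨k, by omega⟩) := by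
  have hlen : (List.ofFn p).length = m := by simp
  have hsort : (List.ofFn p).Pairwise (· ≤ ·) := by
    rw [List.pairwise_iff_getElem]
    intro a b hA hB hab
    simp only [List.getElem_ofFn]
    exact hsorted (by simp only [Fin.mk_le_mk]; omega)
  have hicc : ∀ x ∈ List.ofFn p, x ∈ Set.Icc (0:ℝ) 1 := by
    intro x hx
    rw [List.mem_ofFn] at hx
    obtain ⟨j, rfl⟩ := hx
    exact ⟨hp0 j, hp1 j⟩
  have H := (master hf_nonneg hf_sym hf_mono m).2 (List.ofFn p) hlen hsort hicc
    (m - k) k (i-1) (by omega) (by omega) (by omega) (by omega)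
  simp only [List.getElem_ofFn] at H
  exact H
end
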